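/- arXiv:0907.0162 — 2 statements merged into one kernel-verified Lean document; each statement's English description precedes it below -/
import Mathlib

section
/- For any Q ≥ 2 and any fraction γ_i in F_Q, ν_4(γ_i) = ν_2(γ_i)·ν_2(γ_{i+1})·ν_2(γ_{i+2}) − ν_2(γ_i) − ν_2(γ_{i+2}). -/
open MeasureTheory

/-- The Farey fractions of order `Q`, as a set of rationals in `(0,1]`
with denominator at most `Q` (rationals are automatically in lowest terms). -/
def fareySet (Q : ℕ) : Set ℚ := {x | 0 < x ∧ x ≤ 1 ∧ x.den ≤ Q}

/-- `IsFarey Q N p q` asserts that `i ↦ p i / q i` (for `1 ≤ i ≤ N`) enumerates the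
Farey fractions of order `Q` in increasing order, in lowest terms, extended to all
integer indices by the periodicity `γ_{i+N} = γ_i + 1`. -/
structure IsFarey (Q N : ℕ) (p q : ℤ → ℤ) : Prop where
  qpos : ∀ i : ℤ, 0 < q i
  coprime : ∀ i : ℤ, Int.gcd (p i) (q i) = 1
  mono : ∀ i j : ℤ, i < j → (p i : ℚ) / (q i) < (p j : ℚ) / (q j)
  mem : ∀ i : ℤ, 1 ≤ i → i ≤ (N : ℤ) → ((p i : ℚ) / (q i)) ∈ fareySet Q
  surj : ∀ x ∈ fareySet Q, ∃ i : ℤ, 1 ≤ i ∧ i ≤ (N : ℤ) ∧ (p i : ℚ) / (q i) = x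
  period_p : ∀ i : ℤ, p (i + N) = p i + q i
  period_q : ∀ i : ℤ, q (i + N) = q i

/-- The `k`-index `ν_k(γ_i) = p_{i+k-1} q_{i-1} - p_{i-1} q_{i+k-1}`. -/
def nuk (p q : ℤ → ℤ) (k : ℕ) (i : ℤ) : ℤ :=
  p (i + k - 1) * q (i - 1) - p (i - 1) * q (i + k - 1)

/-- Basic bounds for a Farey fraction at index `j ∈ [1, N]`. -/
private lemma farey_basic (Q N : ℕ) (p q : ℤ → ℤ) (hF : IsFarey Q N p q)
    (j : ℤ) (hj1 : 1 ≤ j) (hj2 : j ≤ (N : ℤ)) :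
    1 ≤ p j ∧ p j ≤ q j ∧ q j ≤ (Q : ℤ) := by
  have hm := hF.mem j hj1 hj2
  simp only [fareySet, Set.mem_setOf_eq] at hm
  obtain ⟨hm1, hm2, hm3⟩ := hm
  have hb : (0 : ℤ) < q j := hF.qpos j
  have hbq : (0 : ℚ) < (q j : ℚ) := by exact_mod_cast hb
  have hden : (((p j : ℚ) / (q j : ℚ)).den : ℤ) = q j :=
    Rat.den_div_eq_of_coprime hb (hF.coprime j)
  refine ⟨?_, ?_, ?_⟩
  · have : (0 : ℚ) < (p j : ℚ) := by
      rcases div_pos_iff.mp hm1 with ⟨h, _⟩ | ⟨_, h⟩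
      · exact h
      · linarith
    exact_mod_cast this
  · have : (p j : ℚ) ≤ (q j : ℚ) := (div_le_one hbq).mp hm2
    exact_mod_cast this
  · calc q j = (((p j : ℚ) / (q j : ℚ)).den : ℤ) := hden.symm
      _ ≤ (Q : ℤ) := by exact_mod_cast hm3

/-- Unimodularity of adjacent Farey fractions, interior case. -/
private lemma farey_adj (Q N : ℕ) (p q : ℤ → ℤ) (hQ : 2 ≤ Q) (hF : IsFarey Q N p q)
    (j : ℤ) (hj1 : 1 ≤ j) (hj2 : j + 1 ≤ (N : ℤ)) :
    p (j + 1) * q j - p j * q (j + 1) = 1 := by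
  have hQ2 : (2 : ℤ) ≤ (Q : ℤ) := by exact_mod_cast hQ
  obtain ⟨ha1, hab, hbQ⟩ := farey_basic Q N p q hF j hj1 (by linarith)
  obtain ⟨hc1, hcd, hdQ⟩ := farey_basic Q N p q hF (j + 1) (by linarith) hj2
  have hb := hF.qpos j
  have hd := hF.qpos (j + 1)
  have hbq : (0 : ℚ) < (q j : ℚ) := by exact_mod_cast hb
  have hdq : (0 : ℚ) < (q (j + 1) : ℚ) := by exact_mod_cast hd
  have hlt : (p j : ℚ) / (q j) < (p (j + 1) : ℚ) / (q (j + 1)) :=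
    hF.mono j (j + 1) (by linarith)
  have hmem2 := hF.mem (j + 1) (by linarith) hj2
  simp only [fareySet, Set.mem_setOf_eq] at hmem2
  have hab_lt : p j < q j := by
    have h1 : (p j : ℚ) / (q j) < 1 := lt_of_lt_of_le hlt hmem2.2.1
    have := (div_lt_one hbq).mp h1
    exact_mod_cast this
  -- Bezout: find x/y in F_Q just above p j / q j
  have hco : IsCoprime (p j) (q j) := Int.isCoprime_iff_gcd_eq_one.mpr (hF.coprime j)
  obtain ⟨s, t, hst⟩ := hco
  obtain ⟨x, y, key, hy1, hy2⟩ :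
      ∃ x y : ℤ, q j * x - p j * y = 1 ∧ (Q : ℤ) - q j < y ∧ y ≤ (Q : ℤ) := by
    refine ⟨t + p j * (((Q : ℤ) + s) / (q j)), -s + q j * (((Q : ℤ) + s) / (q j)),
      by linear_combination hst, ?_, ?_⟩
    · have hmod := Int.emod_lt_of_pos ((Q : ℤ) + s) hb
      have h2 := Int.mul_ediv_add_emod ((Q : ℤ) + s) (q j)
      linarith
    · have hmod := Int.emod_nonneg ((Q : ℤ) + s) (ne_of_gt hb)
      have h2 := Int.mul_ediv_add_emod ((Q : ℤ) + s) (q j)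
      linarith
  have hy0 : 0 < y := by linarith
  have hpy : 0 < p j * y := mul_pos (by linarith) hy0
  have hqx : 0 < q j * x := by linarith
  have hx0 : 0 < x := by
    by_contra h
    push_neg at h
    nlinarith [mul_nonpos_of_nonneg_of_nonpos hb.le h]
  have hxy : x ≤ y := by
    by_contra h
    push_neg at h
    have h1 : y + 1 ≤ x := h
    have h2 : q j * (y + 1) ≤ q j * x := mul_le_mul_of_nonneg_left h1 hb.le
    have h3 : y ≤ (q j - p j) * y := le_mul_of_one_le_left hy0.le (by linarith)
    linarith
  have hgcd : Int.gcd x y = 1 :=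
    Int.isCoprime_iff_gcd_eq_one.mp ⟨q j, -(p j), by linarith⟩
  have hyq : (0 : ℚ) < (y : ℚ) := by exact_mod_cast hy0
  have hxyF : ((x : ℚ) / (y : ℚ)) ∈ fareySet Q := by
    simp only [fareySet, Set.mem_setOf_eq]
    refine ⟨div_pos (by exact_mod_cast hx0) hyq,
      (div_le_one hyq).mpr (by exact_mod_cast hxy), ?_⟩
    have hden : (((x : ℚ) / (y : ℚ)).den : ℤ) = y := Rat.den_div_eq_of_coprime hy0 hgcd
    have : ((((x : ℚ) / (y : ℚ)).den) : ℤ) ≤ (Q : ℤ) := by rw [hden]; exact hy2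
    exact_mod_cast this
  obtain ⟨k, hk1, hk2, hk⟩ := hF.surj _ hxyF
  have hax : (p j : ℚ) / (q j) < (x : ℚ) / (y : ℚ) := by
    rw [div_lt_div_iff₀ hbq hyq]
    exact_mod_cast (by linarith : p j * y < x * q j)
  have hjk : j < k := by
    by_contra h
    push_neg at h
    rcases eq_or_lt_of_le h with heq | h'
    · rw [heq] at hk
      rw [hk] at hax
      exact lt_irrefl _ hax
    · have hmono := hF.mono k j h'
      rw [hk] at hmono
      linarith
  have hcx : (p (j + 1) : ℚ) / (q (j + 1)) ≤ (x : ℚ) / (y : ℚ) := by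
    rcases eq_or_lt_of_le (by linarith : j + 1 ≤ k) with heq | h'
    · rw [heq, hk]
    · have := hF.mono (j + 1) k h'
      rw [hk] at this
      exact this.le
  have hxc : (x : ℚ) / (y : ℚ) ≤ (p (j + 1) : ℚ) / (q (j + 1)) := by
    by_contra h
    push_neg at h
    have h1 : p (j + 1) * y < x * q (j + 1) := by
      have := (div_lt_div_iff₀ hdq hyq).mp h
      exact_mod_cast this
    have h2 : p j * q (j + 1) < p (j + 1) * q j := by
      have := (div_lt_div_iff₀ hbq hdq).mp hlt
      exact_mod_cast this
    have hid : q j * (x * q (j + 1) - p (j + 1) * y)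
        + y * (p (j + 1) * q j - p j * q (j + 1)) = q (j + 1) := by
      linear_combination q (j + 1) * key
    have hn : 1 ≤ x * q (j + 1) - p (j + 1) * y := by linarith
    have hm : 1 ≤ p (j + 1) * q j - p j * q (j + 1) := by linarith
    have hbn := mul_le_mul_of_nonneg_left hn hb.le
    have hym := mul_le_mul_of_nonneg_left hm hy0.le
    linarith
  have heq : (x : ℚ) / (y : ℚ) = (p (j + 1) : ℚ) / (q (j + 1)) := le_antisymm hxc hcx
  obtain ⟨hx_eq, hy_eq⟩ := Rat.div_int_inj hy0 hd hgcd (hF.coprime (j + 1)) heq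
  rw [← hx_eq, ← hy_eq]
  linarith

/-- The endpoints: `γ_N = 1/1`, `γ_1 = 1/Q`, and `N ≥ 2`. -/
private lemma farey_ends (Q N : ℕ) (p q : ℤ → ℤ) (hQ : 2 ≤ Q) (hF : IsFarey Q N p q) :
    p (N : ℤ) = 1 ∧ q (N : ℤ) = 1 ∧ p 1 = 1 ∧ q 1 = (Q : ℤ) ∧ 2 ≤ (N : ℤ) := by
  have hQ2 : (2 : ℤ) ≤ (Q : ℤ) := by exact_mod_cast hQ
  have h1F : (1 : ℚ) ∈ fareySet Q := by
    simp only [fareySet, Set.mem_setOf_eq]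
    refine ⟨one_pos, le_refl _, ?_⟩
    rw [Rat.den_one]
    omega
  obtain ⟨k, hk1, hk2, hk⟩ := hF.surj 1 h1F
  have hN1 : 1 ≤ (N : ℤ) := by linarith
  have hkN : k = (N : ℤ) := by
    by_contra h
    have hlt : k < (N : ℤ) := lt_of_le_of_ne hk2 h
    have hmono := hF.mono k (N : ℤ) hlt
    rw [hk] at hmono
    have hmem := hF.mem (N : ℤ) hN1 le_rfl
    simp only [fareySet, Set.mem_setOf_eq] at hmem
    linarith [hmem.2.1]
  have hNval : (p (N : ℤ) : ℚ) / (q (N : ℤ)) = ((1 : ℤ) : ℚ) / ((1 : ℤ) : ℚ) := by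
    rw [← hkN, hk]; norm_num
  obtain ⟨hpN, hqN⟩ := Rat.div_int_inj (hF.qpos (N : ℤ)) one_pos (hF.coprime (N : ℤ))
    (by norm_num) hNval
  -- first element
  have hQ0 : (0 : ℚ) < ((Q : ℤ) : ℚ) := by exact_mod_cast (by linarith : (0 : ℤ) < (Q : ℤ))
  have hcop1Q : Nat.Coprime (1 : ℤ).natAbs ((Q : ℤ) : ℤ).natAbs := by
    simp [Nat.coprime_one_left]
  have hQF : (((1 : ℤ) : ℚ) / ((Q : ℤ) : ℚ)) ∈ fareySet Q := by
    simp only [fareySet, Set.mem_setOf_eq]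
    refine ⟨div_pos (by norm_num) hQ0, (div_le_one hQ0).mpr (by exact_mod_cast (by linarith : (1:ℤ) ≤ (Q:ℤ)) : (1:ℚ) ≤ ((Q:ℤ):ℚ)), ?_⟩
    have hden : ((((1 : ℤ) : ℚ) / ((Q : ℤ) : ℚ)).den : ℤ) = (Q : ℤ) :=
      Rat.den_div_eq_of_coprime (by linarith) hcop1Q
    have : ((((1 : ℤ) : ℚ) / ((Q : ℤ) : ℚ)).den : ℤ) ≤ (Q : ℤ) := le_of_eq hden
    exact_mod_cast this
  obtain ⟨k', hk'1, hk'2, hk'⟩ := hF.surj _ hQF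
  have hk'eq : k' = 1 := by
    by_contra h
    have hlt : 1 < k' := lt_of_le_of_ne hk'1 (Ne.symm h)
    have hmono := hF.mono 1 k' hlt
    rw [hk'] at hmono
    obtain ⟨hp1a, hp1b, hp1c⟩ := farey_basic Q N p q hF 1 le_rfl (by linarith)
    have hq1pos : (0 : ℚ) < (q 1 : ℚ) := by exact_mod_cast hF.qpos 1
    have hle : ((1 : ℤ) : ℚ) / ((Q : ℤ) : ℚ) ≤ (p 1 : ℚ) / (q 1) := by
      rw [div_le_div_iff₀ hQ0 hq1pos]
      have : (1 : ℤ) * q 1 ≤ p 1 * (Q : ℤ) := by nlinarith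
      exact_mod_cast this
    linarith
  have h1val : (p 1 : ℚ) / (q 1) = ((1 : ℤ) : ℚ) / ((Q : ℤ) : ℚ) := by
    rw [hk'eq] at hk'
    exact hk'
  obtain ⟨hp1, hq1⟩ := Rat.div_int_inj (hF.qpos 1) (by linarith : (0:ℤ) < (Q : ℤ))
    (hF.coprime 1) hcop1Q h1val
  refine ⟨hpN, hqN, hp1, hq1, ?_⟩
  by_contra h
  push_neg at h
  have hN1' : (N : ℤ) = 1 := by omega
  rw [hN1'] at hqN
  omega

/-- Unimodularity of adjacent Farey fractions for all integer indices. -/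
private lemma farey_unimod (Q N : ℕ) (p q : ℤ → ℤ) (hQ : 2 ≤ Q) (hF : IsFarey Q N p q)
    (j : ℤ) : p (j + 1) * q j - p j * q (j + 1) = 1 := by
  obtain ⟨hpN, hqN, hp1, hq1, hN2⟩ := farey_ends Q N p q hQ hF
  have hQ2 : (2 : ℤ) ≤ (Q : ℤ) := by exact_mod_cast hQ
  have base : ∀ r : ℤ, 1 ≤ r → r ≤ (N : ℤ) → p (r + 1) * q r - p r * q (r + 1) = 1 := by
    intro r hr1 hr2
    rcases eq_or_lt_of_le hr2 with heq | hlt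
    · have hp' : p ((N : ℤ) + 1) = p 1 + q 1 := by
        rw [show (N : ℤ) + 1 = 1 + (N : ℤ) from by ring]
        exact hF.period_p 1
      have hq' : q ((N : ℤ) + 1) = q 1 := by
        rw [show (N : ℤ) + 1 = 1 + (N : ℤ) from by ring]
        exact hF.period_q 1
      rw [heq, hp', hq', hpN, hqN, hp1, hq1]
      ring
    · exact farey_adj Q N p q hQ hF r hr1 (by linarith)
  have step : ∀ r : ℤ, p (r + (N : ℤ) + 1) * q (r + (N : ℤ)) - p (r + (N : ℤ)) * q (r + (N : ℤ) + 1)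
      = p (r + 1) * q r - p r * q (r + 1) := by
    intro r
    have h1 : p (r + (N : ℤ) + 1) = p (r + 1) + q (r + 1) := by
      rw [show r + (N : ℤ) + 1 = (r + 1) + (N : ℤ) from by ring]
      exact hF.period_p (r + 1)
    have h2 : q (r + (N : ℤ) + 1) = q (r + 1) := by
      rw [show r + (N : ℤ) + 1 = (r + 1) + (N : ℤ) from by ring]
      exact hF.period_q (r + 1)
    rw [h1, h2, hF.period_p r, hF.period_q r]
    ring
  have all : ∀ m : ℤ, ∀ r : ℤ, 1 ≤ r → r ≤ (N : ℤ) →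
      p (r + m * (N : ℤ) + 1) * q (r + m * (N : ℤ))
        - p (r + m * (N : ℤ)) * q (r + m * (N : ℤ) + 1) = 1 := by
    intro m
    induction m using Int.induction_on with
    | zero =>
      intro r h1 h2
      simpa using base r h1 h2
    | succ k ih =>
      intro r h1 h2
      have e : r + ((k : ℤ) + 1) * (N : ℤ) = (r + (k : ℤ) * (N : ℤ)) + (N : ℤ) := by ring
      rw [e, step (r + (k : ℤ) * (N : ℤ))]
      exact ih r h1 h2
    | pred k ih =>
      intro r h1 h2
      have ih' := ih r h1 h2
      have e : r + (-(k : ℤ)) * (N : ℤ) = (r + (-(k : ℤ) - 1) * (N : ℤ)) + (N : ℤ) := by ring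
      rw [e, step (r + (-(k : ℤ) - 1) * (N : ℤ))] at ih'
      exact ih'
  have hN0 : (0 : ℤ) < (N : ℤ) := by linarith
  have hdm := Int.mul_ediv_add_emod (j - 1) (N : ℤ)
  have hm0 := Int.emod_nonneg (j - 1) (by linarith : (N : ℤ) ≠ 0)
  have hm1 := Int.emod_lt_of_pos (j - 1) hN0
  have hall := all ((j - 1) / (N : ℤ)) ((j - 1) % (N : ℤ) + 1) (by linarith) (by linarith)
  rw [show (j - 1) % (N : ℤ) + 1 + ((j - 1) / (N : ℤ)) * (N : ℤ) = j from by linarith] at hall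
  exact hall

/-- The basic three-term recurrence step from two unimodularity relations. -/
private lemma rec_step (a0 a1 a2 b0 b1 b2 : ℤ) (hb1 : b1 ≠ 0)
    (e0 : a1 * b0 - a0 * b1 = 1) (e1 : a2 * b1 - a1 * b2 = 1) :
    a2 = (a2 * b0 - a0 * b2) * a1 - a0 ∧ b2 = (a2 * b0 - a0 * b2) * b1 - b0 := by
  constructor
  · have h : b1 * (a2 - ((a2 * b0 - a0 * b2) * a1 - a0)) = 0 := by
      linear_combination (-(a2 * b1)) * e0 + (-(a0 * b1)) * e1
    rcases mul_eq_zero.mp h with h' | h'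
    · exact absurd h' hb1
    · linarith
  · have h : b1 * (b2 - ((a2 * b0 - a0 * b2) * b1 - b0)) = 0 := by
      linear_combination (-(b1 * b2)) * e0 + (-(b0 * b1)) * e1
    rcases mul_eq_zero.mp h with h' | h'
    · exact absurd h' hb1
    · linarith

/-- `ν_4(γ_i) = ν_2(γ_i) ν_2(γ_{i+1}) ν_2(γ_{i+2}) - ν_2(γ_i) - ν_2(γ_{i+2})`. -/
theorem nu4_identity (Q N : ℕ) (p q : ℤ → ℤ) (hQ : 2 ≤ Q)
    (hF : IsFarey Q N p q) (i : ℤ) (h1 : 1 ≤ i) (h2 : i ≤ (N : ℤ)) :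
    nuk p q 4 i = nuk p q 2 i * nuk p q 2 (i + 1) * nuk p q 2 (i + 2)
      - nuk p q 2 i - nuk p q 2 (i + 2) := by
  have U := farey_unimod Q N p q hQ hF
  have e0 : p i * q (i - 1) - p (i - 1) * q i = 1 := by
    have h := U (i - 1)
    rw [show i - 1 + 1 = i from by ring] at h
    exact h
  have e1 := U i
  have e2 : p (i + 2) * q (i + 1) - p (i + 1) * q (i + 2) = 1 := by
    have h := U (i + 1)
    rw [show i + 1 + 1 = i + 2 from by ring] at h
    exact h
  have e3 : p (i + 3) * q (i + 2) - p (i + 2) * q (i + 3) = 1 := by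
    have h := U (i + 2)
    rw [show i + 2 + 1 = i + 3 from by ring] at h
    exact h
  have hb2 : q (i + 1) ≠ 0 := (hF.qpos (i + 1)).ne'
  have hb3 : q (i + 2) ≠ 0 := (hF.qpos (i + 2)).ne'
  obtain ⟨hA3, hB3⟩ := rec_step (p i) (p (i + 1)) (p (i + 2)) (q i) (q (i + 1)) (q (i + 2))
    hb2 e1 e2
  obtain ⟨hA4, hB4⟩ := rec_step (p (i + 1)) (p (i + 2)) (p (i + 3)) (q (i + 1)) (q (i + 2))
    (q (i + 3)) hb3 e2 e3
  simp only [nuk]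
  push_cast
  rw [show i + 4 - 1 = i + 3 from by ring, show i + 1 + 2 - 1 = i + 2 from by ring,
    show i + 2 + 2 - 1 = i + 3 from by ring, show i + 2 - 1 = i + 1 from by ring,
    show i + 1 - 1 = i from by ring]
  linear_combination (q (i - 1)) * hA4 - (p (i - 1)) * hB4
    + (p (i + 3) * q (i + 1) - p (i + 1) * q (i + 3)) * (q (i - 1)) * hA3
    - (p (i + 3) * q (i + 1) - p (i + 1) * q (i + 3)) * (p (i - 1)) * hB3
    - (p (i + 3) * q (i + 1) - p (i + 1) * q (i + 3)) * e0
end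

section
/- Let Q ≥ 2 and let q_{j-1}, q_j be denominators of consecutive fractions γ_{j-1} < γ_j in the Farey sequence F_Q. Then T(q_{j-1}/Q, q_j/Q) = (q_j/Q, q_{j+1}/Q), where T(x,y) = (y, ⌊(1+x)/y⌋·y − x). -/
open MeasureTheory

/-- The Farey triangle `𝒯 = {(x,y) ∈ [0,1]² : x + y > 1}`. -/
def fareyTriangle : Set (ℝ × ℝ) :=
  {v | v.1 ∈ Set.Icc (0 : ℝ) 1 ∧ v.2 ∈ Set.Icc (0 : ℝ) 1 ∧ 1 < v.1 + v.2}

/-- The Farey triangle map `T(x,y) = (y, ⌊(1+x)/y⌋·y − x)`. -/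
noncomputable def Tmap (v : ℝ × ℝ) : ℝ × ℝ :=
  (v.2, (⌊(1 + v.1) / v.2⌋ : ℝ) * v.2 - v.1)

section Aux

variable {Q N : ℕ} {p q : ℤ → ℤ}

lemma farey_coprime (hF : IsFarey Q N p q) (i : ℤ) :
    Nat.Coprime (p i).natAbs (q i).natAbs := hF.coprime i

/-- The numerator of `γ_i` is `p i`. -/
lemma farey_num (hF : IsFarey Q N p q) (i : ℤ) : ((p i : ℚ) / (q i)).num = p i :=
  Rat.num_div_eq_of_coprime (hF.qpos i) (farey_coprime hF i)

/-- The denominator of `γ_i` is `q i`. -/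
lemma farey_den (hF : IsFarey Q N p q) (i : ℤ) : (((p i : ℚ) / (q i)).den : ℤ) = q i :=
  Rat.den_div_eq_of_coprime (hF.qpos i) (farey_coprime hF i)

lemma farey_q_le (hF : IsFarey Q N p q) (i : ℤ) (h1 : 1 ≤ i) (h2 : i ≤ (N : ℤ)) :
    q i ≤ (Q : ℤ) := by
  have hm := hF.mem i h1 h2
  have hd := farey_den hF i
  have h3 := hm.2.2
  omega

lemma farey_p_pos (hF : IsFarey Q N p q) (i : ℤ) (h1 : 1 ≤ i) (h2 : i ≤ (N : ℤ)) :
    0 < p i := by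
  have hm := (hF.mem i h1 h2).1
  have hq : (0:ℚ) < (q i : ℚ) := by exact_mod_cast hF.qpos i
  by_contra h
  push_neg at h
  have : (p i : ℚ) / (q i) ≤ 0 := by
    apply div_nonpos_of_nonpos_of_nonneg
    · exact_mod_cast h
    · exact hq.le
  linarith

lemma farey_p_le_q (hF : IsFarey Q N p q) (i : ℤ) (h1 : 1 ≤ i) (h2 : i ≤ (N : ℤ)) :
    p i ≤ q i := by
  have hm := (hF.mem i h1 h2).2.1
  have hq : (0:ℚ) < (q i : ℚ) := by exact_mod_cast hF.qpos i
  have : (p i : ℚ) ≤ (q i : ℚ) := by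
    rw [div_le_one hq] at hm
    exact hm
  exact_mod_cast this


lemma farey_unimodular (hF : IsFarey Q N p q) (hQ : 2 ≤ Q) (i : ℤ)
    (h1 : 1 ≤ i) (h2 : i + 1 ≤ (N : ℤ)) :
    q i * p (i+1) - p i * q (i+1) = 1 ∧ (Q : ℤ) < q i + q (i+1) := by
  have hb : 0 < q i := hF.qpos i
  have hd : 0 < q (i+1) := hF.qpos (i+1)
  have ha : 0 < p i := farey_p_pos hF i h1 (by omega)
  have hbQ : q i ≤ (Q:ℤ) := farey_q_le hF i h1 (by omega)
  have hdQ : q (i+1) ≤ (Q:ℤ) := farey_q_le hF (i+1) (by omega) h2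
  have hbq : (0:ℚ) < ((q i : ℤ):ℚ) := by exact_mod_cast hb
  have hdq : (0:ℚ) < ((q (i+1) : ℤ):ℚ) := by exact_mod_cast hd
  have hlt : ((p i : ℤ):ℚ)/(q i) < ((p (i+1) : ℤ):ℚ)/(q (i+1)) := hF.mono i (i+1) (by omega)
  -- p i < q i
  have hab : p i < q i := by
    have hle : p i ≤ q i := farey_p_le_q hF i h1 (by omega)
    rcases hle.lt_or_eq with h | h
    · exact h
    · exfalso
      have hg := farey_coprime hF i
      rw [h] at hg
      have hb1 : (q i).natAbs = 1 := by
        have hgs := Nat.gcd_self (q i).natAbs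
        unfold Nat.Coprime at hg
        omega
      have hone : ((p i : ℤ):ℚ)/(q i) = 1 := by
        rw [h, show q i = 1 by omega]; norm_num
      have hle1 := (hF.mem (i+1) (by omega) h2).2.1
      rw [hone] at hlt
      linarith
  -- Bezout
  obtain ⟨u, v, huv⟩ : ∃ u v : ℤ, q i * u - p i * v = 1 := by
    have hg : Int.gcd (p i) (q i) = 1 := hF.coprime i
    have hbez := Int.gcd_eq_gcd_ab (p i) (q i)
    rw [hg] at hbez
    exact ⟨Int.gcdB (p i) (q i), -(Int.gcdA (p i) (q i)), by push_cast at hbez; linarith⟩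
  -- shift v into (Q - q i, Q]
  obtain ⟨x, y, hxy, hx_le, hx_gt⟩ :
      ∃ x y : ℤ, q i * y - p i * x = 1 ∧ x ≤ (Q:ℤ) ∧ (Q:ℤ) - q i < x := by
    have hmod := Int.mul_ediv_add_emod ((Q:ℤ) - v) (q i)
    have hm0 : 0 ≤ ((Q:ℤ) - v) % (q i) := Int.emod_nonneg _ hb.ne'
    have hm1 : ((Q:ℤ) - v) % (q i) < q i := Int.emod_lt_of_pos _ hb
    refine ⟨(Q:ℤ) - ((Q:ℤ) - v) % (q i), u + p i * (((Q:ℤ) - v) / (q i)), ?_, by omega, by omega⟩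
    linear_combination huv + p i * hmod
  have hx_pos : 0 < x := by omega
  have hxq : (0:ℚ) < (x:ℚ) := by exact_mod_cast hx_pos
  have hy_pos : 0 < y := by nlinarith [mul_pos ha hx_pos]
  have hyx_le : y ≤ x := by
    have hax : p i * x ≤ (q i - 1) * x := mul_le_mul_of_nonneg_right (by omega) hx_pos.le
    have hby : q i * y ≤ q i * x := by nlinarith
    exact le_of_mul_le_mul_left hby hb
  have hcop : Nat.Coprime y.natAbs x.natAbs :=
    Int.isCoprime_iff_gcd_eq_one.mp ⟨q i, -(p i), by linear_combination hxy⟩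
  have hyx_mem : (y:ℚ)/(x:ℚ) ∈ fareySet Q := by
    refine ⟨div_pos (by exact_mod_cast hy_pos) hxq, ?_, ?_⟩
    · rw [div_le_one hxq]; exact_mod_cast hyx_le
    · have hden := Rat.den_div_eq_of_coprime hx_pos hcop
      omega
  obtain ⟨k, hk1, hk2, hk⟩ := hF.surj _ hyx_mem
  have haxy : p i * x + 1 = y * q i := by linear_combination -hxy
  have hik : i < k := by
    by_contra hcon
    push_neg at hcon
    have hle2 : (y:ℚ)/(x:ℚ) ≤ ((p i : ℤ):ℚ)/(q i) := by
      rcases hcon.lt_or_eq with h | h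
      · exact (hk ▸ hF.mono k i h).le
      · rw [← hk, h]
    have hlt2 : ((p i : ℤ):ℚ)/(q i) < (y:ℚ)/(x:ℚ) := by
      rw [div_lt_div_iff₀ hbq hxq]
      exact_mod_cast (by linarith [haxy] : p i * x < y * q i)
    linarith
  have hcd_le : ((p (i+1) : ℤ):ℚ)/(q (i+1)) ≤ (y:ℚ)/(x:ℚ) := by
    rcases (show i+1 ≤ k by omega).lt_or_eq with h | h
    · exact le_of_lt (hk ▸ hF.mono _ _ h)
    · rw [← hk, h]
  have heq : ((p (i+1) : ℤ):ℚ)/(q (i+1)) = (y:ℚ)/(x:ℚ) := by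
    rcases hcd_le.lt_or_eq with h | h
    · exfalso
      have e1 : p i * q (i+1) + 1 ≤ p (i+1) * q i := by
        rw [div_lt_div_iff₀ hbq hdq] at hlt
        have : p i * q (i+1) < p (i+1) * q i := by exact_mod_cast hlt
        linarith
      have e2 : p (i+1) * x + 1 ≤ y * q (i+1) := by
        rw [div_lt_div_iff₀ hdq hxq] at h
        have : p (i+1) * x < y * q (i+1) := by exact_mod_cast h
        linarith
      have key2 : q (i+1) = q i * (y * q (i+1) - p (i+1) * x)
          + x * (p (i+1) * q i - p i * q (i+1)) := by
        linear_combination (-(q (i+1))) * hxy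
      have hb_s : q i ≤ q i * (y * q (i+1) - p (i+1) * x) :=
        le_mul_of_one_le_right hb.le (by linarith)
      have hx_s : x ≤ x * (p (i+1) * q i - p i * q (i+1)) :=
        le_mul_of_one_le_right hx_pos.le (by linarith)
      linarith
    · exact h
  obtain ⟨hcy, hdx⟩ := Rat.div_int_inj hd hx_pos (farey_coprime hF (i+1)) hcop heq
  constructor
  · rw [hcy, hdx]; linear_combination hxy
  · omega

lemma farey_last (hF : IsFarey Q N p q) (hQ : 2 ≤ Q) : p N = 1 ∧ q N = 1 := by
  have h1mem : (1:ℚ) ∈ fareySet Q := ⟨one_pos, le_refl _, by simp; omega⟩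
  obtain ⟨k, hk1, hk2, hk⟩ := hF.surj 1 h1mem
  have hkN : k = (N:ℤ) := by
    by_contra h
    have hkN' : k < (N:ℤ) := lt_of_le_of_ne hk2 h
    have hmono := hF.mono k (N:ℤ) hkN'
    rw [hk] at hmono
    have hle := (hF.mem (N:ℤ) (by omega) le_rfl).2.1
    linarith
  rw [hkN] at hk
  have h11 : ((p (N:ℤ) : ℚ)) / (q (N:ℤ)) = ((1:ℤ):ℚ) / ((1:ℤ):ℚ) := by
    rw [hk]; norm_num
  exact Rat.div_int_inj (hF.qpos _) one_pos (farey_coprime hF _) (by norm_num) h11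

lemma farey_first (hF : IsFarey Q N p q) (hQ : 2 ≤ Q) : p 1 = 1 ∧ q 1 = (Q:ℤ) := by
  have hQ0 : (0:ℤ) < (Q:ℤ) := by exact_mod_cast (by omega : 0 < Q)
  have hQq : (0:ℚ) < ((Q:ℤ):ℚ) := by exact_mod_cast hQ0
  have hcop1 : Nat.Coprime (1:ℤ).natAbs ((Q:ℤ)).natAbs := by simp
  have hmem : ((1:ℤ):ℚ) / ((Q:ℤ):ℚ) ∈ fareySet Q := by
    refine ⟨div_pos (by norm_num) hQq, ?_, ?_⟩
    · rw [div_le_one hQq]; exact_mod_cast (by omega : (1:ℤ) ≤ (Q:ℤ))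
    · have hden := Rat.den_div_eq_of_coprime hQ0 hcop1
      omega
  obtain ⟨k, hk1, hk2, hk⟩ := hF.surj _ hmem
  have hk1' : k = 1 := by
    by_contra h
    have hlt : (1:ℤ) < k := lt_of_le_of_ne hk1 (Ne.symm h)
    have hmono := hF.mono 1 k hlt
    rw [hk] at hmono
    have hp1 : 0 < p 1 := farey_p_pos hF 1 le_rfl (by omega)
    have hq1 : q 1 ≤ (Q:ℤ) := farey_q_le hF 1 le_rfl (by omega)
    have hq1p : (0:ℚ) < ((q 1 : ℤ):ℚ) := by exact_mod_cast hF.qpos 1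
    rw [div_lt_div_iff₀ hq1p hQq] at hmono
    have hZ : p 1 * (Q:ℤ) < 1 * q 1 := by exact_mod_cast hmono
    have : (Q:ℤ) ≤ p 1 * (Q:ℤ) := le_mul_of_one_le_left hQ0.le hp1
    linarith
  rw [hk1'] at hk
  exact Rat.div_int_inj (hF.qpos 1) hQ0 (farey_coprime hF 1) hcop1 hk

lemma farey_unimodular' (hF : IsFarey Q N p q) (hQ : 2 ≤ Q) (i : ℤ)
    (h0 : 0 ≤ i) (hN : i ≤ (N : ℤ)) :
    q i * p (i+1) - p i * q (i+1) = 1 ∧ (Q : ℤ) < q i + q (i+1) := by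
  obtain ⟨hpN, hqN⟩ := farey_last hF hQ
  obtain ⟨hp1, hq1⟩ := farey_first hF hQ
  rcases h0.eq_or_lt with h | h
  · -- i = 0
    have hq0 : q 0 = 1 := by have := hF.period_q 0; rw [zero_add] at this; omega
    have hp0 : p 0 = 0 := by have := hF.period_p 0; rw [zero_add] at this; omega
    rw [← h, show (0:ℤ)+1 = 1 by norm_num, hq0, hp0, hp1, hq1]
    omega
  · rcases hN.eq_or_lt with h' | h'
    · -- i = N
      have hpN1 : p ((N:ℤ)+1) = 1 + (Q:ℤ) := by
        have := hF.period_p 1; rw [show (1:ℤ) + (N:ℤ) = (N:ℤ) + 1 by ring] at this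
        omega
      have hqN1 : q ((N:ℤ)+1) = (Q:ℤ) := by
        have := hF.period_q 1; rw [show (1:ℤ) + (N:ℤ) = (N:ℤ) + 1 by ring] at this
        omega
      rw [h']
      rw [hpN, hqN, hpN1, hqN1]
      omega
    · exact farey_unimodular hF hQ i h (by omega)

lemma farey_recurrence (hF : IsFarey Q N p q) (hQ : 2 ≤ Q) (j : ℤ)
    (h1 : 1 ≤ j) (h2 : j ≤ (N : ℤ)) :
    ∃ k : ℤ, q (j+1) = k * q j - q (j-1) ∧
      k * q j ≤ q (j-1) + (Q:ℤ) ∧ q (j-1) + (Q:ℤ) < (k+1) * q j := by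
  obtain ⟨u1, s1⟩ := farey_unimodular' hF hQ (j-1) (by omega) (by omega)
  obtain ⟨u2, s2⟩ := farey_unimodular' hF hQ j (by omega) h2
  rw [show j - 1 + 1 = j by ring] at u1 s1
  have hq3Q : q (j+1) ≤ (Q:ℤ) := by
    rcases h2.lt_or_eq with h | h
    · exact farey_q_le hF (j+1) (by omega) (by omega)
    · have hper := hF.period_q 1
      rw [h, show (N:ℤ) + 1 = 1 + (N:ℤ) by ring, hper, (farey_first hF hQ).2]
  have hco : IsCoprime (q j) (p j) :=
    (Int.isCoprime_iff_gcd_eq_one.mpr (hF.coprime j)).symm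
  have hmul : q j ∣ p j * (q (j-1) + q (j+1)) :=
    ⟨p (j-1) + p (j+1), by linear_combination u1 - u2⟩
  obtain ⟨k, hk⟩ := hco.dvd_of_dvd_mul_left hmul
  have hk' : k * q j = q (j-1) + q (j+1) := by linear_combination -hk
  refine ⟨k, by linarith, by linarith, ?_⟩
  nlinarith [hk', s2]

end Aux

/-- `T(q_{j-1}/Q, q_j/Q) = (q_j/Q, q_{j+1}/Q)` for consecutive Farey denominators. -/
theorem Tmap_farey_denominators (Q N : ℕ) (p q : ℤ → ℤ) (hQ : 2 ≤ Q)
    (hF : IsFarey Q N p q) (j : ℤ) (h1 : 1 ≤ j) (h2 : j ≤ (N : ℤ)) :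
    Tmap ((q (j - 1) : ℝ) / Q, (q j : ℝ) / Q) = ((q j : ℝ) / Q, (q (j + 1) : ℝ) / Q) := by
  obtain ⟨k, hrec, hlo, hhi⟩ := farey_recurrence hF hQ j h1 h2
  have hQR : (0:ℝ) < (Q:ℝ) := by exact_mod_cast (by omega : 0 < Q)
  have hbR : (0:ℝ) < ((q j : ℤ):ℝ) := by exact_mod_cast hF.qpos j
  have hz : (1 + ((q (j-1) : ℤ):ℝ)/(Q:ℝ)) / (((q j : ℤ):ℝ)/(Q:ℝ))
      = ((Q:ℝ) + ((q (j-1) : ℤ):ℝ)) / ((q j : ℤ):ℝ) := by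
    field_simp
  have hloR : (k:ℝ) * ((q j : ℤ):ℝ) ≤ ((q (j-1) : ℤ):ℝ) + (Q:ℝ) := by exact_mod_cast hlo
  have hhiR : ((q (j-1) : ℤ):ℝ) + (Q:ℝ) < ((k:ℝ)+1) * ((q j : ℤ):ℝ) := by exact_mod_cast hhi
  have hfloor : ⌊(1 + ((q (j-1) : ℤ):ℝ)/(Q:ℝ)) / (((q j : ℤ):ℝ)/(Q:ℝ))⌋ = k := by
    rw [hz, Int.floor_eq_iff]
    constructor
    · rw [le_div_iff₀ hbR]; linarith
    · rw [div_lt_iff₀ hbR]; linarith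
  have hrecR : ((q (j+1) : ℤ):ℝ) = (k:ℝ) * ((q j : ℤ):ℝ) - ((q (j-1) : ℤ):ℝ) := by
    exact_mod_cast hrec
  unfold Tmap
  refine Prod.ext rfl ?_
  simp only
  rw [hfloor, hrecR]
  field_simp
end
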